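/- Let D be an optimum [ns,k]_s-distribution in base q with s ≤ k ≤ ns. Then every elementary box Δ^M_A ∈ E_s(q,n) with a_1+...+a_n ≤ k contains exactly q^{k - a_1 - ... - a_n} points of D, and every elementary box with a_1+...+a_n > k contains at most one point of D. Consequently D is a (k-s, k, n)-net in base q. -/

import Mathlib

/-- The number of points of `D` in the elementary box
`Π_j [m_j / q^{a_j}, (m_j + 1) / q^{a_j})`. -/
noncomputable def boxCount {n : ℕ} (q : ℕ) (D : Finset (Fin n → ℝ))
    (A m : Fin n → ℕ) : ℕ :=
  (D.filter fun X => ∀ j, (m j : ℝ) / (q : ℝ) ^ (A j) ≤ X j ∧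
    X j < ((m j : ℝ) + 1) / (q : ℝ) ^ (A j)).card

private lemma nat_div_eq_iff {a b c : ℕ} (hb : 0 < b) :
    a / b = c ↔ c * b ≤ a ∧ a < (c + 1) * b := by
  constructor
  · rintro rfl
    refine ⟨Nat.div_mul_le_self a b, ?_⟩
    have h1 := Nat.div_add_mod a b
    have h2 := Nat.mod_lt a hb
    calc a = b * (a / b) + a % b := h1.symm
      _ < b * (a / b) + b := by omega
      _ = (a / b + 1) * b := by ring
  · rintro ⟨h1, h2⟩
    exact Nat.div_eq_of_lt_le h1 h2

private lemma box_mem_iff_floor {q a m : ℕ} (hq : 0 < q) {x : ℝ} (hx : 0 ≤ x) :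
    ((m : ℝ) / (q : ℝ) ^ a ≤ x ∧ x < ((m : ℝ) + 1) / (q : ℝ) ^ a) ↔
      ⌊x * (q : ℝ) ^ a⌋₊ = m := by
  have hqa : (0 : ℝ) < (q : ℝ) ^ a := by positivity
  rw [Nat.floor_eq_iff (by positivity), div_le_iff₀ hqa, lt_div_iff₀ hqa]

private lemma floor_pow_div {q a a' : ℕ} (hq : 0 < q) (h : a ≤ a') {x : ℝ} :
    ⌊x * (q : ℝ) ^ a⌋₊ = ⌊x * (q : ℝ) ^ a'⌋₊ / q ^ (a' - a) := by
  have : x * (q : ℝ) ^ a = x * (q : ℝ) ^ a' / ((q : ℝ) ^ (a' - a)) := by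
    rw [eq_div_iff (by positivity), mul_assoc, ← pow_add]
    congr 2
    omega
  rw [this, show ((q : ℝ) ^ (a' - a)) = ((q ^ (a' - a) : ℕ) : ℝ) by push_cast; ring,
    Nat.floor_div_natCast]

/-- Existence of an intermediate exponent vector. -/
private lemma existsBetweenVec {n : ℕ} (U : Fin n → ℕ) (k : ℕ) (d : ℕ) :
    ∀ L : Fin n → ℕ, (∀ j, L j ≤ U j) → (∑ j, L j ≤ k) → (k ≤ ∑ j, U j) →
    k - (∑ j, L j) = d →
    ∃ A : Fin n → ℕ, (∀ j, L j ≤ A j) ∧ (∀ j, A j ≤ U j) ∧ (∑ j, A j) = k := by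
  induction d with
  | zero =>
    intro L hLU h1 _ hd
    exact ⟨L, fun j => le_refl _, hLU, by omega⟩
  | succ d ih =>
    intro L hLU h1 h2 hd
    have hlt : ∑ j, L j < ∑ j, U j := by omega
    have : ∃ j, L j < U j := by
      by_contra h
      push_neg at h
      exact absurd (Finset.sum_le_sum (fun j _ => h j)) (not_le.mpr hlt)
    obtain ⟨j0, hj0⟩ := this
    set L' := Function.update L j0 (L j0 + 1) with hL'
    have hsum : ∑ j, L' j = (∑ j, L j) + 1 := by
      rw [hL', Finset.sum_update_of_mem (Finset.mem_univ j0)]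
      rw [show (∑ j, L j) = L j0 + ∑ j ∈ Finset.univ \ {j0}, L j by
        rw [Finset.sum_eq_add_sum_sdiff_singleton_of_mem (Finset.mem_univ j0)]]
      ring
    obtain ⟨A, hA1, hA2, hA3⟩ := ih L'
      (fun j => by
        rcases eq_or_ne j j0 with rfl | h
        · simp only [hL', Function.update_self]; omega
        · simp [hL', Function.update_of_ne h, hLU j])
      (by omega) h2 (by omega)
    exact ⟨A, fun j => le_trans (by
      rcases eq_or_ne j j0 with rfl | h
      · simp [hL']
      · simp [hL', Function.update_of_ne h]) (hA1 j), hA2, hA3⟩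

private lemma boxCount_decompose {n q : ℕ} (hq : 0 < q) (D : Finset (Fin n → ℝ))
    (hcube : ∀ X ∈ D, ∀ j, 0 ≤ X j) (A A' m : Fin n → ℕ) (hAA' : ∀ j, A j ≤ A' j) :
    boxCount q D A m =
      ∑ m' ∈ Fintype.piFinset (fun j => Finset.Ico (m j * q ^ (A' j - A j))
        ((m j + 1) * q ^ (A' j - A j))), boxCount q D A' m' := by
  classical
  set S := Fintype.piFinset (fun j => Finset.Ico (m j * q ^ (A' j - A j))
      ((m j + 1) * q ^ (A' j - A j))) with hS
  unfold boxCount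
  simp only [Finset.card_filter]
  rw [Finset.sum_comm]
  refine Finset.sum_congr rfl fun X hX => ?_
  set fX : Fin n → ℕ := fun j => ⌊X j * (q : ℝ) ^ (A' j)⌋₊ with hfX
  have hmem : ∀ m'' : Fin n → ℕ,
      (∀ j, (m'' j : ℝ) / (q : ℝ) ^ (A' j) ≤ X j ∧
        X j < ((m'' j : ℝ) + 1) / (q : ℝ) ^ (A' j)) ↔ m'' = fX := by
    intro m''
    rw [funext_iff]
    refine forall_congr' fun j => ?_
    rw [box_mem_iff_floor hq (hcube X hX j)]
    exact eq_comm
  have hstep : ∀ m' ∈ S,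
      (if (∀ j, (m' j : ℝ) / (q : ℝ) ^ (A' j) ≤ X j ∧
        X j < ((m' j : ℝ) + 1) / (q : ℝ) ^ (A' j)) then (1 : ℕ) else 0)
      = (if m' = fX then (1 : ℕ) else 0) := fun m' _ => if_congr (hmem m') rfl rfl
  rw [Finset.sum_congr rfl hstep, Finset.sum_ite_eq' S fX (fun _ => (1 : ℕ))]
  have hiff : (∀ j, (m j : ℝ) / (q : ℝ) ^ (A j) ≤ X j ∧
      X j < ((m j : ℝ) + 1) / (q : ℝ) ^ (A j)) ↔ fX ∈ S := by
    rw [hS, Fintype.mem_piFinset]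
    refine forall_congr' fun j => ?_
    rw [box_mem_iff_floor hq (hcube X hX j), floor_pow_div hq (hAA' j),
      Finset.mem_Ico, nat_div_eq_iff (Nat.pow_pos hq)]
  exact if_congr hiff rfl rfl

theorem optimum_distribution_counts_and_net {n q s k : ℕ} (hq : 2 ≤ q)
    (hsk : s ≤ k) (hkn : k ≤ n * s) (D : Finset (Fin n → ℝ))
    (hcube : ∀ X ∈ D, ∀ j, 0 ≤ X j ∧ X j < 1) (hcard : D.card = q ^ k)
    (hopt : ∀ A m : Fin n → ℕ, (∀ j, A j ≤ s) → (∑ j, A j) = k →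
      (∀ j, m j < q ^ (A j)) → boxCount q D A m = 1) :
    (∀ A m : Fin n → ℕ, (∀ j, A j ≤ s) → (∑ j, A j) ≤ k →
        (∀ j, m j < q ^ (A j)) → boxCount q D A m = q ^ (k - ∑ j, A j)) ∧
    (∀ A m : Fin n → ℕ, (∀ j, A j ≤ s) → k < (∑ j, A j) →
        (∀ j, m j < q ^ (A j)) → boxCount q D A m ≤ 1) ∧
    (∀ A m : Fin n → ℕ, (∑ j, A j) = s → (∀ j, m j < q ^ (A j)) →
        boxCount q D A m = q ^ (k - s)) := by
  have hq0 : 0 < q := by omega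
  have hcube' : ∀ X ∈ D, ∀ j, 0 ≤ X j := fun X hX j => (hcube X hX j).1
  have part1 : ∀ A m : Fin n → ℕ, (∀ j, A j ≤ s) → (∑ j, A j) ≤ k →
      (∀ j, m j < q ^ (A j)) → boxCount q D A m = q ^ (k - ∑ j, A j) := by
    intro A m hAs hle hm
    obtain ⟨A', h1, h2, h3⟩ := existsBetweenVec (fun _ => s) k (k - ∑ j, A j) A hAs hle
      (by simpa [Finset.sum_const, Finset.card_univ, mul_comm] using hkn) rfl
    rw [boxCount_decompose hq0 D hcube' A A' m h1]
    have hone : ∀ m' ∈ Fintype.piFinset (fun j => Finset.Ico (m j * q ^ (A' j - A j))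
        ((m j + 1) * q ^ (A' j - A j))), boxCount q D A' m' = 1 := by
      intro m' hm'
      refine hopt A' m' h2 h3 fun j => ?_
      have := (Fintype.mem_piFinset.mp hm' j)
      rw [Finset.mem_Ico] at this
      calc m' j < (m j + 1) * q ^ (A' j - A j) := this.2
        _ ≤ q ^ (A j) * q ^ (A' j - A j) := by
            exact Nat.mul_le_mul_right _ (hm j)
        _ = q ^ (A' j) := by rw [← pow_add]; congr 1; have := h1 j; omega
    rw [Finset.sum_congr rfl hone, Finset.sum_const, smul_eq_mul, mul_one,
      Fintype.card_piFinset]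
    have hc : ∀ j, (Finset.Ico (m j * q ^ (A' j - A j))
        ((m j + 1) * q ^ (A' j - A j))).card = q ^ (A' j - A j) := by
      intro j
      rw [Nat.card_Ico, add_mul, one_mul, Nat.add_sub_cancel_left]
    rw [Finset.prod_congr rfl fun j _ => hc j, Finset.prod_pow_eq_pow_sum,
      Finset.sum_tsub_distrib _ fun j _ => h1 j, h3]
  refine ⟨part1, ?_, ?_⟩
  · intro A m hAs hlt hm
    obtain ⟨A', h1, h2, h3⟩ := existsBetweenVec A k k (fun _ => 0)
      (fun j => Nat.zero_le _) (by simp) (le_of_lt hlt) (by simp)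
    set m' : Fin n → ℕ := fun j => m j / q ^ (A j - A' j) with hm'
    have hone : boxCount q D A' m' = 1 := by
      refine hopt A' m' (fun j => le_trans (h2 j) (hAs j)) h3 fun j => ?_
      rw [hm']
      rw [Nat.div_lt_iff_lt_mul (Nat.pow_pos hq0), ← pow_add]
      calc m j < q ^ (A j) := hm j
        _ ≤ q ^ (A' j + (A j - A' j)) := by
            apply Nat.pow_le_pow_right hq0; omega
    rw [← hone]
    unfold boxCount
    apply Finset.card_le_card
    intro X hX
    simp only [Finset.mem_filter] at hX ⊢
    refine ⟨hX.1, fun j => ?_⟩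
    have hX0 : ∀ j, 0 ≤ X j := hcube' X hX.1
    rw [box_mem_iff_floor hq0 (hX0 j), floor_pow_div hq0 (h2 j),
      (box_mem_iff_floor hq0 (hX0 j)).mp (hX.2 j)]
  · intro A m hsum hm
    have hAs : ∀ j, A j ≤ s := by
      intro j
      rw [← hsum]
      exact Finset.single_le_sum (fun i _ => Nat.zero_le _) (Finset.mem_univ j)
    rw [part1 A m hAs (by omega) hm, hsum]
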